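/- A Q-category E is total if and only if E is injective in Q-CAT with respect to fully faithful Q-functors: for all Q-functors F : C → E and fully faithful G : C → D there exists a Q-functor H : D → E with HG ≅ F. -/

import Mathlib

/-! Common framework: quantaloids and quantaloid-enriched categories. -/

universe u v w w₂

structure Quantaloid (Obj : Type u) : Type (max u (v + 1)) where
  Hom : Obj → Obj → Type v
  [lat : ∀ S T : Obj, CompleteLattice (Hom S T)]
  comp : ∀ {S T U : Obj}, Hom T U → Hom S T → Hom S U
  one : ∀ S : Obj, Hom S S
  comp_assoc : ∀ {S T U V : Obj} (x : Hom U V) (y : Hom T U) (z : Hom S T),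
    comp (comp x y) z = comp x (comp y z)
  one_comp : ∀ {S T : Obj} (u : Hom S T), comp (one T) u = u
  comp_one : ∀ {S T : Obj} (u : Hom S T), comp u (one S) = u
  comp_sSup : ∀ {S T U : Obj} (v : Hom T U) (s : Set (Hom S T)),
    comp v (sSup s) = ⨆ u ∈ s, comp v u
  sSup_comp : ∀ {S T U : Obj} (s : Set (Hom T U)) (u : Hom S T),
    comp (sSup s) u = ⨆ v ∈ s, comp v u

attribute [instance] Quantaloid.lat

namespace Quantaloid

variable {Obj : Type u} (Q : Quantaloid Obj)

/-- Right extension `w ↙ u`. -/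
def rext {S T U : Obj} (w : Q.Hom S U) (u : Q.Hom S T) : Q.Hom T U :=
  sSup {v : Q.Hom T U | Q.comp v u ≤ w}

/-- Right lifting `v ↘ w`. -/
def rlift {S T U : Obj} (v : Q.Hom T U) (w : Q.Hom S U) : Q.Hom S T :=
  sSup {u : Q.Hom S T | Q.comp v u ≤ w}

/-- Transport of a hom-arrow along equalities of objects. -/
def cast2 {S S' T T' : Obj} (hS : S = S') (hT : T = T') (u : Q.Hom S T) : Q.Hom S' T' := by
  subst hS; subst hT; exact u

variable {Q}

theorem comp_le_comp_left {S T U : Obj} {v v' : Q.Hom T U} (h : v ≤ v') (u : Q.Hom S T) :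
    Q.comp v u ≤ Q.comp v' u := by
  have h2 : (sSup {v, v'} : Q.Hom T U) = v' := by rw [sSup_pair, sup_eq_right.mpr h]
  calc Q.comp v u ≤ ⨆ x ∈ ({v, v'} : Set (Q.Hom T U)), Q.comp x u :=
        le_iSup₂ (f := fun x (_ : x ∈ ({v, v'} : Set (Q.Hom T U))) => Q.comp x u) v (by simp)
  _ = Q.comp v' u := by rw [← Q.sSup_comp, h2]

theorem comp_le_comp_right {S T U : Obj} (v : Q.Hom T U) {u u' : Q.Hom S T} (h : u ≤ u') :
    Q.comp v u ≤ Q.comp v u' := by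
  have h2 : (sSup {u, u'} : Q.Hom S T) = u' := by rw [sSup_pair, sup_eq_right.mpr h]
  calc Q.comp v u ≤ ⨆ x ∈ ({u, u'} : Set (Q.Hom S T)), Q.comp v x :=
        le_iSup₂ (f := fun x (_ : x ∈ ({u, u'} : Set (Q.Hom S T))) => Q.comp v x) u (by simp)
  _ = Q.comp v u' := by rw [← Q.comp_sSup, h2]

theorem le_rext_iff {S T U : Obj} {w : Q.Hom S U} {u : Q.Hom S T} {v : Q.Hom T U} :
    v ≤ Q.rext w u ↔ Q.comp v u ≤ w := by
  constructor
  · intro h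
    refine le_trans (comp_le_comp_left h u) ?_
    rw [Quantaloid.rext, Q.sSup_comp]
    exact iSup₂_le fun x hx => hx
  · intro h; exact le_sSup h

theorem le_rlift_iff {S T U : Obj} {v : Q.Hom T U} {w : Q.Hom S U} {u' : Q.Hom S T} :
    u' ≤ Q.rlift v w ↔ Q.comp v u' ≤ w := by
  constructor
  · intro h
    refine le_trans (comp_le_comp_right v h) ?_
    rw [Quantaloid.rlift, Q.comp_sSup]
    exact iSup₂_le fun x hx => hx
  · intro h; exact le_sSup h

/-- The opposite quantaloid. -/
def op (Q : Quantaloid Obj) : Quantaloid Obj where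
  Hom S T := Q.Hom T S
  lat S T := Q.lat T S
  comp v u := Q.comp u v
  one := Q.one
  comp_assoc x y z := (Q.comp_assoc z y x).symm
  one_comp u := Q.comp_one u
  comp_one u := Q.one_comp u
  comp_sSup v s := Q.sSup_comp s v
  sSup_comp s u := Q.comp_sSup u s

end Quantaloid

/-- A (possibly large) `Q`-category. -/
structure QCat {Obj : Type u} (Q : Quantaloid.{u, v} Obj) : Type (max u v (w + 1)) where
  Ob : Type w
  ext : Ob → Obj
  hom : ∀ X Y : Ob, Q.Hom (ext X) (ext Y)
  id_le : ∀ X : Ob, Q.one (ext X) ≤ hom X X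
  comp_le : ∀ X Y Z : Ob, Q.comp (hom Y Z) (hom X Y) ≤ hom X Z

variable {Obj : Type u} {Q : Quantaloid.{u, v} Obj}

/-- The dual `Q^op`-category. -/
def QCat.op (E : QCat.{u, v, w} Q) : QCat.{u, v, w} Q.op where
  Ob := E.Ob
  ext := E.ext
  hom X Y := E.hom Y X
  id_le X := E.id_le X
  comp_le X Y Z := E.comp_le Z Y X

/-- A (contravariant) presheaf on a `Q`-category. -/
structure Presheaf (E : QCat.{u, v, w} Q) : Type (max u v w) where
  ext : Obj
  arr : ∀ X : E.Ob, Q.Hom (E.ext X) ext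
  compat : ∀ X X' : E.Ob, Q.comp (arr X) (E.hom X' X) ≤ arr X'

/-- A covariant presheaf on a `Q`-category. -/
structure Copresheaf (E : QCat.{u, v, w} Q) : Type (max u v w) where
  ext : Obj
  arr : ∀ X : E.Ob, Q.Hom ext (E.ext X)
  compat : ∀ X X' : E.Ob, Q.comp (E.hom X X') (arr X) ≤ arr X'

/-- Hom-arrows of the presheaf `Q`-category `PE`. -/
def PEhom {E : QCat.{u, v, w} Q} (φ ψ : Presheaf E) : Q.Hom φ.ext ψ.ext :=
  ⨅ X : E.Ob, Q.rext (ψ.arr X) (φ.arr X)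

/-- Hom-arrows of the covariant presheaf `Q`-category `P†E`. -/
def coPEhom {E : QCat.{u, v, w} Q} (ψ ψ' : Copresheaf E) : Q.Hom ψ.ext ψ'.ext :=
  ⨅ X : E.Ob, Q.rlift (ψ'.arr X) (ψ.arr X)

/-- The Yoneda embedding on objects: the representable presheaf. -/
def yonedaP (E : QCat.{u, v, w} Q) (Z : E.Ob) : Presheaf E where
  ext := E.ext Z
  arr X := E.hom X Z
  compat X X' := E.comp_le X' X Z

theorem PE_id_le {E : QCat.{u, v, w} Q} (φ : Presheaf E) : Q.one φ.ext ≤ PEhom φ φ :=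
  le_iInf fun X => Quantaloid.le_rext_iff.mpr (by rw [Q.one_comp])

theorem PE_comp_le {E : QCat.{u, v, w} Q} (φ ψ χ : Presheaf E) :
    Q.comp (PEhom ψ χ) (PEhom φ ψ) ≤ PEhom φ χ :=
  le_iInf fun X => Quantaloid.le_rext_iff.mpr (by
    rw [Q.comp_assoc]
    exact le_trans
      (Quantaloid.comp_le_comp_right (v := PEhom ψ χ) (u' := ψ.arr X)
        (Quantaloid.le_rext_iff.mp (iInf_le _ X)))
      (Quantaloid.le_rext_iff.mp (iInf_le _ X)))

/-- `Y` is a supremum of the presheaf `φ`. -/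
def IsSup (E : QCat.{u, v, w} Q) (φ : Presheaf E) (Y : E.Ob) : Prop :=
  ∃ h : φ.ext = E.ext Y, ∀ Z : E.Ob,
    Q.cast2 h.symm rfl (E.hom Y Z) = ⨅ X : E.Ob, Q.rext (E.hom X Z) (φ.arr X)

/-- Totality: every presheaf has a supremum. -/
def QTotal (E : QCat.{u, v, w} Q) : Prop := ∀ φ : Presheaf E, ∃ Y : E.Ob, IsSup E φ Y

/-- `Y` is a tensor `u ⋆ X`. -/
def IsTensor (E : QCat.{u, v, w} Q) (X : E.Ob) {T : Obj} (u : Q.Hom (E.ext X) T) (Y : E.Ob) : Prop :=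
  ∃ h : T = E.ext Y, ∀ Z : E.Ob,
    Q.cast2 h.symm rfl (E.hom Y Z) = Q.rext (E.hom X Z) u

def Tensored (E : QCat.{u, v, w} Q) : Prop :=
  ∀ (X : E.Ob) (T : Obj) (u : Q.Hom (E.ext X) T), ∃ Y : E.Ob, IsTensor E X u Y

/-- Conical cocompleteness: joins of representables have suprema. -/
def ConicallyCocomplete (E : QCat.{u, v, w} Q) : Prop :=
  ∀ (T : Obj) (ι : Type w) (Y : ι → E.Ob) (e : ∀ i, E.ext (Y i) = T)
    (ψ : Presheaf E) (hψ : ψ.ext = T),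
    (∀ X : E.Ob, ψ.arr X = Q.cast2 rfl hψ.symm (⨆ i, Q.cast2 rfl (e i) (E.hom X (Y i)))) →
    ∃ Y0 : E.Ob, IsSup E ψ Y0

/-- A `Q`-functor. -/
structure QFun (E : QCat.{u, v, w} Q) (D : QCat.{u, v, w₂} Q) : Type (max u w w₂) where
  obj : E.Ob → D.Ob
  ext_eq : ∀ X : E.Ob, E.ext X = D.ext (obj X)
  le_hom : ∀ X Y : E.Ob,
    E.hom X Y ≤ Q.cast2 (ext_eq X).symm (ext_eq Y).symm (D.hom (obj X) (obj Y))

def FullyFaithful {E : QCat.{u, v, w} Q} {D : QCat.{u, v, w₂} Q} (F : QFun E D) : Prop :=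
  ∀ X Y : E.Ob,
    Q.cast2 (F.ext_eq X).symm (F.ext_eq Y).symm (D.hom (F.obj X) (F.obj Y)) = E.hom X Y

/-- A `Q`-distributor. -/
structure QDist (E D : QCat.{u, v, w} Q) : Type (max u v w) where
  d : ∀ (X : E.Ob) (Y : D.Ob), Q.Hom (E.ext X) (D.ext Y)
  compat : ∀ (X X' : E.Ob) (Y Y' : D.Ob),
    Q.comp (D.hom Y Y') (Q.comp (d X Y) (E.hom X' X)) ≤ d X' Y'

/-- The identity distributor of a `Q`-category. -/
def homDist (E : QCat.{u, v, w} Q) : QDist E E where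
  d := E.hom
  compat X X' Y Y' :=
    le_trans (Quantaloid.comp_le_comp_right _ (E.comp_le X' X Y)) (E.comp_le X' Y Y')

/-- The Isbell closure `Φ↓Φ↑φ`, computed pointwise. -/
def isbell {E B : QCat.{u, v, w} Q} (Φ : QDist E B) (φ : Presheaf E) (X : E.Ob) :
    Q.Hom (E.ext X) φ.ext :=
  ⨅ Y : B.Ob, Q.rlift (⨅ X' : E.Ob, Q.rext (Φ.d X' Y) (φ.arr X')) (Φ.d X Y)

/-- The Isbell `Q`-category of a distributor: fixed points of `Φ↓Φ↑`. -/
def ICat {E B : QCat.{u, v, w} Q} (Φ : QDist E B) : QCat.{u, v, max u v w} Q where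
  Ob := {φ : Presheaf E // ∀ X : E.Ob, isbell Φ φ X = φ.arr X}
  ext φ := φ.1.ext
  hom φ ψ := PEhom φ.1 ψ.1
  id_le φ := PE_id_le φ.1
  comp_le φ ψ χ := PE_comp_le φ.1 ψ.1 χ.1

/-- The fibre of a `Q`-category over `T`. -/
def Fib (E : QCat.{u, v, w} Q) (T : Obj) := {X : E.Ob // E.ext X = T}

def fibLE {E : QCat.{u, v, w} Q} {T : Obj} (X Y : Fib E T) : Prop :=
  Q.one T ≤ Q.cast2 X.2 Y.2 (E.hom X.1 Y.1)

def IsFibJoin {E : QCat.{u, v, w} Q} {T : Obj} (s : Set (Fib E T)) (Y : Fib E T) : Prop :=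
  (∀ X ∈ s, fibLE X Y) ∧ ∀ Z : Fib E T, (∀ X ∈ s, fibLE X Z) → fibLE Y Z

def OrderComplete (E : QCat.{u, v, w} Q) : Prop :=
  ∀ (T : Obj) (s : Set (Fib E T)), ∃ Y : Fib E T, IsFibJoin s Y

/-- A right adjoint to a `Q`-functor. -/
structure RAdj {E D : QCat.{u, v, w} Q} (F : QFun E D) : Type (max u w) where
  G : D.Ob → E.Ob
  ext_eq : ∀ Y : D.Ob, D.ext Y = E.ext (G Y)
  functor : ∀ Y Y' : D.Ob,
    D.hom Y Y' ≤ Q.cast2 (ext_eq Y).symm (ext_eq Y').symm (E.hom (G Y) (G Y'))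
  adj : ∀ (X : E.Ob) (Y : D.Ob),
    Q.cast2 rfl (ext_eq Y).symm (E.hom X (G Y)) =
      Q.cast2 (F.ext_eq X).symm rfl (D.hom (F.obj X) Y)

/-- A left adjoint to a `Q`-functor. -/
structure LAdjTo {A C : QCat.{u, v, w} Q} (J : QFun A C) : Type (max u w) where
  L : C.Ob → A.Ob
  ext_eq : ∀ Y : C.Ob, C.ext Y = A.ext (L Y)
  functor : ∀ Y Y' : C.Ob,
    C.hom Y Y' ≤ Q.cast2 (ext_eq Y).symm (ext_eq Y').symm (A.hom (L Y) (L Y'))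
  adj : ∀ (Y : C.Ob) (X : A.Ob),
    Q.cast2 (ext_eq Y).symm rfl (A.hom (L Y) X) =
      Q.cast2 rfl (J.ext_eq X).symm (C.hom Y (J.obj X))

/-- A left adjoint to the Yoneda functor. -/
structure YonedaLAdj (E : QCat.{u, v, w} Q) : Type (max u v w) where
  L : Presheaf E → E.Ob
  ext_eq : ∀ φ : Presheaf E, φ.ext = E.ext (L φ)
  functor : ∀ φ ψ : Presheaf E,
    PEhom φ ψ ≤ Q.cast2 (ext_eq φ).symm (ext_eq ψ).symm (E.hom (L φ) (L ψ))
  adj : ∀ (φ : Presheaf E) (Z : E.Ob),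
    Q.cast2 (ext_eq φ).symm rfl (E.hom (L φ) Z) = PEhom φ (yonedaP E Z)

/-- A left adjoint to `E(X,−) : E → P{|X|}`. -/
structure TensorLAdj (E : QCat.{u, v, w} Q) (X : E.Ob) : Type (max u v w) where
  L : ∀ {T : Obj}, Q.Hom (E.ext X) T → E.Ob
  ext_eq : ∀ {T : Obj} (u : Q.Hom (E.ext X) T), T = E.ext (L u)
  functor : ∀ {T U : Obj} (u : Q.Hom (E.ext X) T) (v : Q.Hom (E.ext X) U),
    Q.rext v u ≤ Q.cast2 (ext_eq u).symm (ext_eq v).symm (E.hom (L u) (L v))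
  adj : ∀ {T : Obj} (u : Q.Hom (E.ext X) T) (Z : E.Ob),
    Q.cast2 (ext_eq u).symm rfl (E.hom (L u) Z) = Q.rext (E.hom X Z) u

/-- A `Q`-functor into the presheaf category `PE`. -/
structure QPFun (C E : QCat.{u, v, w} Q) : Type (max u v w) where
  obj : C.Ob → Presheaf E
  ext_eq : ∀ Z : C.Ob, C.ext Z = (obj Z).ext
  le_hom : ∀ Z Z' : C.Ob,
    C.hom Z Z' ≤ Q.cast2 (ext_eq Z).symm (ext_eq Z').symm (PEhom (obj Z) (obj Z'))

/-- Two objects of a `Q`-category are isomorphic. -/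
def ObIso (B : QCat.{u, v, w} Q) (Y Y' : B.Ob) : Prop :=
  ∃ h : B.ext Y = B.ext Y',
    (Q.one (B.ext Y) ≤ Q.cast2 rfl h.symm (B.hom Y Y')) ∧
    (Q.one (B.ext Y) ≤ Q.cast2 h.symm rfl (B.hom Y' Y))

/-- Equivalence of `Q`-categories. -/
def QEquiv (A : QCat.{u, v, w} Q) (B : QCat.{u, v, w₂} Q) : Prop :=
  ∃ F : QFun A B, FullyFaithful F ∧ ∀ Y : B.Ob, ∃ X : A.Ob, ObIso B (F.obj X) Y

/-- `Y` is the weighted colimit `φ ⋆ J`. -/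
def IsWeightedColim {E : QCat.{u, v, w} Q} {C : QCat.{u, v, w₂} Q} (J : QFun E C) (φ : Presheaf E) (Y : C.Ob) : Prop :=
  ∃ h : φ.ext = C.ext Y, ∀ Z : C.Ob,
    Q.cast2 h.symm rfl (C.hom Y Z) =
      ⨅ X : E.Ob, Q.rext (Q.cast2 (J.ext_eq X).symm rfl (C.hom (J.obj X) Z)) (φ.arr X)

/-- `Y` is the weighted limit `ψ ⤳ J`. -/
def IsWeightedLim {E : QCat.{u, v, w} Q} {C : QCat.{u, v, w₂} Q} (J : QFun E C) (ψ : Copresheaf E) (Y : C.Ob) : Prop :=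
  ∃ h : ψ.ext = C.ext Y, ∀ Z : C.Ob,
    Q.cast2 rfl h.symm (C.hom Z Y) =
      ⨅ X : E.Ob, Q.rlift (ψ.arr X) (Q.cast2 rfl (J.ext_eq X).symm (C.hom Z (J.obj X)))

/-- `HG ≅ F` for `Q`-functors. -/
def CompIso {C D E : QCat.{u, v, w} Q} (G : QFun C D) (H : QFun D E) (F : QFun C E) : Prop :=
  (∀ X : C.Ob, Q.one (C.ext X) ≤
    Q.cast2 ((G.ext_eq X).trans (H.ext_eq (G.obj X))).symm (F.ext_eq X).symm
      (E.hom (H.obj (G.obj X)) (F.obj X))) ∧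
  (∀ X : C.Ob, Q.one (C.ext X) ≤
    Q.cast2 (F.ext_eq X).symm ((G.ext_eq X).trans (H.ext_eq (G.obj X))).symm
      (E.hom (F.obj X) (H.obj (G.obj X))))

section Aux
namespace Quantaloid
variable {Obj : Type u} {Q : Quantaloid.{u, v} Obj}

@[simp] theorem cast2_rfl_rfl {S T : Obj} (u : Q.Hom S T) : Q.cast2 rfl rfl u = u := rfl

theorem cast2_mono {S S' T T' : Obj} (hS : S = S') (hT : T = T') {u v : Q.Hom S T}
    (h : u ≤ v) : Q.cast2 hS hT u ≤ Q.cast2 hS hT v := by subst hS; subst hT; exact h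

theorem cast2_cast2 {S S' S'' T T' T'' : Obj} (h1 : S = S') (h2 : S' = S'')
    (k1 : T = T') (k2 : T' = T'') (u : Q.Hom S T) :
    Q.cast2 h2 k2 (Q.cast2 h1 k1 u) = Q.cast2 (h1.trans h2) (k1.trans k2) u := by
  subst h1; subst h2; subst k1; subst k2; rfl

theorem cast2_le_iff' {S S' T T' : Obj} (hS : S = S') (hT : T = T') (u : Q.Hom S T)
    (v : Q.Hom S' T') : Q.cast2 hS hT u ≤ v ↔ u ≤ Q.cast2 hS.symm hT.symm v := by
  subst hS; subst hT; rfl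

theorem le_cast2_iff' {S S' T T' : Obj} (hS : S = S') (hT : T = T') (u : Q.Hom S' T')
    (v : Q.Hom S T) : u ≤ Q.cast2 hS hT v ↔ Q.cast2 hS.symm hT.symm u ≤ v := by
  subst hS; subst hT; rfl

theorem cast2_comp' {S S' T T' U U' : Obj} (hS : S = S') (hT : T = T') (hU : U = U')
    (v : Q.Hom T U) (u : Q.Hom S T) :
    Q.cast2 hS hU (Q.comp v u) = Q.comp (Q.cast2 hT hU v) (Q.cast2 hS hT u) := by
  subst hS; subst hT; subst hU; rfl

theorem cast2_one' {S S' : Obj} (h : S = S') : Q.cast2 h h (Q.one S) = Q.one S' := by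
  subst h; rfl

theorem cast2_iInf {ι : Sort*} {S S' T T' : Obj} (hS : S = S') (hT : T = T')
    (f : ι → Q.Hom S T) : Q.cast2 hS hT (⨅ i, f i) = ⨅ i, Q.cast2 hS hT (f i) := by
  subst hS; subst hT; rfl

theorem cast2_iSup {ι : Sort*} {S S' T T' : Obj} (hS : S = S') (hT : T = T')
    (f : ι → Q.Hom S T) : Q.cast2 hS hT (⨆ i, f i) = ⨆ i, Q.cast2 hS hT (f i) := by
  subst hS; subst hT; rfl

theorem cast2_rext {S T U U' : Obj} (hU : U = U') (w : Q.Hom S U) (u : Q.Hom S T) :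
    Q.cast2 rfl hU (Q.rext w u) = Q.rext (Q.cast2 rfl hU w) u := by subst hU; rfl

theorem cast2_rext_left {S S' T U : Obj} (hS : S = S') (w : Q.Hom S U) (u : Q.Hom S T) :
    Q.rext w u = Q.rext (Q.cast2 hS rfl w) (Q.cast2 hS rfl u) := by subst hS; rfl

theorem comp_iSup {ι : Sort*} {S T U : Obj} (v : Q.Hom T U) (f : ι → Q.Hom S T) :
    Q.comp v (⨆ i, f i) = ⨆ i, Q.comp v (f i) := by
  rw [iSup, Q.comp_sSup, iSup_range]

theorem iSup_comp {ι : Sort*} {S T U : Obj} (f : ι → Q.Hom T U) (u : Q.Hom S T) :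
    Q.comp (⨆ i, f i) u = ⨆ i, Q.comp (f i) u := by
  rw [iSup, Q.sSup_comp, iSup_range]

end Quantaloid
end Aux

section Bwd
namespace Quantaloid
variable {Obj : Type u} {Q : Quantaloid.{u, v} Obj}

theorem comp_unit_le {S S' U : Obj} (h : S = S') {e : Q.Hom S S'}
    (he : Q.one S ≤ Q.cast2 rfl h.symm e) (v : Q.Hom S' U) :
    Q.cast2 h.symm rfl v ≤ Q.comp v e := by
  subst h
  calc Q.cast2 rfl rfl v = Q.comp v (Q.one S) := (Q.comp_one v).symm
  _ ≤ Q.comp v e := comp_le_comp_right v he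

theorem unit_comp_le {S T T' : Obj} (h : T = T') {e : Q.Hom T' T}
    (he : Q.one T ≤ Q.cast2 h.symm rfl e) (v : Q.Hom S T') :
    Q.cast2 rfl h.symm v ≤ Q.comp e v := by
  subst h
  calc Q.cast2 rfl rfl v = Q.comp (Q.one T) v := (Q.one_comp v).symm
  _ ≤ Q.comp e v := comp_le_comp_left he v

end Quantaloid

open Quantaloid

variable {Obj : Type u} {Q : Quantaloid.{u, v} Obj}

/-- The collage: `E` together with one extra object representing the presheaf `φ`. -/
def collage (E : QCat.{u, v, w} Q) (φ : Presheaf E) : QCat.{u, v, w} Q where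
  Ob := Option E.Ob
  ext o := match o with
    | some X => E.ext X
    | none => φ.ext
  hom o o' := match o, o' with
    | some X, some Y => E.hom X Y
    | some X, none => φ.arr X
    | none, some Z => ⨅ X, Q.rext (E.hom X Z) (φ.arr X)
    | none, none => ⨅ X, Q.rext (φ.arr X) (φ.arr X)
  id_le o := match o with
    | some X => E.id_le X
    | none => le_iInf fun X => le_rext_iff.mpr (by rw [Q.one_comp])
  comp_le o o' o'' := by
    have hA : ∀ (Z X : E.Ob),
        Q.comp (⨅ X', Q.rext (E.hom X' Z) (φ.arr X')) (φ.arr X) ≤ E.hom X Z := fun Z X =>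
      le_trans (comp_le_comp_left (iInf_le _ X) _) (le_rext_iff.mp le_rfl)
    have hB : ∀ (X : E.Ob),
        Q.comp (⨅ X', Q.rext (φ.arr X') (φ.arr X')) (φ.arr X) ≤ φ.arr X := fun X =>
      le_trans (comp_le_comp_left (iInf_le _ X) _) (le_rext_iff.mp le_rfl)
    match o, o', o'' with
    | some X, some Y, some Z => exact E.comp_le X Y Z
    | some X, some Y, none => exact φ.compat Y X
    | some X, none, some Z => exact hA Z X
    | some X, none, none => exact hB X
    | none, some Y, some Z =>
      refine le_iInf fun X => le_rext_iff.mpr ?_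
      rw [Q.comp_assoc]
      exact le_trans (comp_le_comp_right _ (hA Y X)) (E.comp_le X Y Z)
    | none, some Y, none =>
      refine le_iInf fun X => le_rext_iff.mpr ?_
      rw [Q.comp_assoc]
      exact le_trans (comp_le_comp_right _ (hA Y X)) (φ.compat Y X)
    | none, none, some Z =>
      refine le_iInf fun X => le_rext_iff.mpr ?_
      rw [Q.comp_assoc]
      exact le_trans (comp_le_comp_right _ (hB X)) (hA Z X)
    | none, none, none =>
      refine le_iInf fun X => le_rext_iff.mpr ?_
      rw [Q.comp_assoc]
      exact le_trans (comp_le_comp_right _ (hB X)) (hB X)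

theorem stmt17_bwd (E : QCat.{u, v, w} Q)
    (hyp : ∀ (C D : QCat.{u, v, w} Q) (F : QFun C E) (G : QFun C D),
      FullyFaithful G → ∃ H : QFun D E, CompIso G H F) : QTotal E := by
  intro φ
  set D := collage E φ with hD
  let G : QFun E D := ⟨fun X => some X, fun X => rfl, fun X Y => le_rfl⟩
  let F : QFun E E := ⟨id, fun X => rfl, fun X Y => le_rfl⟩
  have ffG : FullyFaithful G := fun X Y => rfl
  obtain ⟨H, h1, h2⟩ := hyp E D F G ffG
  set Y := H.obj none with hY
  have h : φ.ext = E.ext Y := H.ext_eq none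
  refine ⟨Y, h, fun Z => le_antisymm ?_ ?_⟩
  · -- cast2 h.symm rfl (E.hom Y Z) ≤ ⨅ X, rext (E.hom X Z) (φ.arr X)
    refine le_iInf fun X => le_rext_iff.mpr ?_
    have hsX : E.ext X = E.ext (H.obj (some X)) := H.ext_eq (some X)
    have claim1 : φ.arr X ≤ Q.cast2 rfl h.symm (E.hom X Y) := by
      have s1 : φ.arr X ≤ Q.cast2 hsX.symm h.symm (E.hom (H.obj (some X)) Y) :=
        H.le_hom (some X) none
      have s2 : Q.cast2 hsX.symm rfl (E.hom (H.obj (some X)) Y) ≤ E.hom X Y :=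
        le_trans (comp_unit_le hsX (h2 X) _) (E.comp_le X (H.obj (some X)) Y)
      calc φ.arr X ≤ Q.cast2 hsX.symm h.symm (E.hom (H.obj (some X)) Y) := s1
      _ = Q.cast2 rfl h.symm (Q.cast2 hsX.symm rfl (E.hom (H.obj (some X)) Y)) := by
          rw [cast2_cast2]
      _ ≤ Q.cast2 rfl h.symm (E.hom X Y) := cast2_mono rfl h.symm s2
    calc Q.comp (Q.cast2 h.symm rfl (E.hom Y Z)) (φ.arr X)
        ≤ Q.comp (Q.cast2 h.symm rfl (E.hom Y Z)) (Q.cast2 rfl h.symm (E.hom X Y)) :=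
          comp_le_comp_right _ claim1
    _ = Q.comp (E.hom Y Z) (E.hom X Y) := (cast2_comp' rfl h.symm rfl _ _).symm
    _ ≤ E.hom X Z := E.comp_le X Y Z
  · -- ⨅ ≤ cast2 h.symm rfl (E.hom Y Z)
    have hsZ : E.ext Z = E.ext (H.obj (some Z)) := H.ext_eq (some Z)
    have s1 : (⨅ X, Q.rext (E.hom X Z) (φ.arr X)) ≤
        Q.cast2 h.symm hsZ.symm (E.hom Y (H.obj (some Z))) := H.le_hom none (some Z)
    have s2 : Q.cast2 rfl hsZ.symm (E.hom Y (H.obj (some Z))) ≤ E.hom Y Z :=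
      le_trans (unit_comp_le hsZ (h1 Z) _) (E.comp_le Y (H.obj (some Z)) Z)
    calc (⨅ X, Q.rext (E.hom X Z) (φ.arr X))
        ≤ Q.cast2 h.symm hsZ.symm (E.hom Y (H.obj (some Z))) := s1
    _ = Q.cast2 h.symm rfl (Q.cast2 rfl hsZ.symm (E.hom Y (H.obj (some Z)))) := by
        rw [cast2_cast2]
    _ ≤ Q.cast2 h.symm rfl (E.hom Y Z) := cast2_mono h.symm rfl s2

end Bwd

section Fwd
open Quantaloid

namespace Quantaloid
variable {Obj : Type u} {Q : Quantaloid.{u, v} Obj}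

theorem comp_cast2_dom {S S' T U : Obj} (h : S = S') (v : Q.Hom T U) (u : Q.Hom S T) :
    Q.comp v (Q.cast2 h rfl u) = Q.cast2 h rfl (Q.comp v u) := by subst h; rfl

theorem cast2_cod_comp {S T U U' : Obj} (h : U = U') (v : Q.Hom T U) (u : Q.Hom S T) :
    Q.comp (Q.cast2 rfl h v) u = Q.cast2 rfl h (Q.comp v u) := by subst h; rfl

theorem one_le_rext_cast {S T U T' : Obj} (hT : T' = T) (hU : T' = U)
    (w : Q.Hom S U) (u : Q.Hom S T) (hle : Q.cast2 rfl (hT.symm.trans hU) u ≤ w) :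
    Q.one T' ≤ Q.cast2 hT.symm hU.symm (Q.rext w u) := by
  subst hT; subst hU
  refine le_rext_iff.mpr ?_
  rw [Q.one_comp]
  exact hle

end Quantaloid

variable {Obj : Type u} {Q : Quantaloid.{u, v} Obj}

/-- If `Y₀` is the supremum of `φ`, then `φ` is a cocone under `Y₀`. -/
theorem sup_cocone {E : QCat.{u, v, w} Q} {φ : Presheaf E} {Y0 : E.Ob}
    (h : φ.ext = E.ext Y0)
    (hs : ∀ Z, Q.cast2 h.symm rfl (E.hom Y0 Z) = ⨅ X, Q.rext (E.hom X Z) (φ.arr X))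
    (W : E.Ob) : φ.arr W ≤ Q.cast2 rfl h.symm (E.hom W Y0) := by
  have h1 : Q.cast2 h.symm rfl (E.hom Y0 Y0) ≤ Q.rext (E.hom W Y0) (φ.arr W) :=
    (hs Y0).le.trans (iInf_le _ W)
  have h2 : Q.comp (Q.cast2 h.symm rfl (E.hom Y0 Y0)) (φ.arr W) ≤ E.hom W Y0 :=
    Quantaloid.le_rext_iff.mp h1
  have e0 : Q.cast2 rfl h.symm (Q.cast2 rfl h (φ.arr W)) = φ.arr W := by
    rw [Quantaloid.cast2_cast2]; rfl
  have hrw : Q.comp (Q.cast2 h.symm rfl (E.hom Y0 Y0)) (φ.arr W) =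
      Q.comp (E.hom Y0 Y0) (Q.cast2 rfl h (φ.arr W)) := by
    conv_lhs => rw [← e0]
    exact (Quantaloid.cast2_comp' rfl h.symm rfl _ _).symm
  have h3 : Q.cast2 rfl h (φ.arr W) ≤ E.hom W Y0 := by
    calc Q.cast2 rfl h (φ.arr W)
        = Q.comp (Q.one (E.ext Y0)) (Q.cast2 rfl h (φ.arr W)) := (Q.one_comp _).symm
    _ ≤ Q.comp (E.hom Y0 Y0) (Q.cast2 rfl h (φ.arr W)) :=
        Quantaloid.comp_le_comp_left (E.id_le Y0) _
    _ = Q.comp (Q.cast2 h.symm rfl (E.hom Y0 Y0)) (φ.arr W) := hrw.symm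
    _ ≤ E.hom W Y0 := h2
  exact (Quantaloid.le_cast2_iff' rfl h.symm _ _).mpr h3

variable {C D E : QCat.{u, v, w} Q}

/-- The distributor arrow `D(G−, Y)` whiskered to live over `E.ext (F −)`. -/
def kanArr (F : QFun C E) (G : QFun C D) (Y : D.Ob) (X : C.Ob) :
    Q.Hom (E.ext (F.obj X)) (D.ext Y) :=
  Q.cast2 ((G.ext_eq X).symm.trans (F.ext_eq X)) rfl (D.hom (G.obj X) Y)

/-- The left Kan extension presheaf `sup ∘ F_! ∘ G_♮(−,Y)`. -/
def kanPre (F : QFun C E) (G : QFun C D) (Y : D.Ob) : Presheaf E where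
  ext := D.ext Y
  arr Z := ⨆ X : C.Ob, Q.comp (kanArr F G Y X) (E.hom Z (F.obj X))
  compat Z Z' := by
    show Q.comp (⨆ X, Q.comp (kanArr F G Y X) (E.hom Z (F.obj X))) (E.hom Z' Z) ≤
      ⨆ X, Q.comp (kanArr F G Y X) (E.hom Z' (F.obj X))
    rw [Quantaloid.iSup_comp]
    refine iSup_le fun X => ?_
    rw [Q.comp_assoc]
    exact le_trans (Quantaloid.comp_le_comp_right _ (E.comp_le Z' Z (F.obj X)))
      (le_iSup (fun X => Q.comp (kanArr F G Y X) (E.hom Z' (F.obj X))) X)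

theorem kanPre_arr (F : QFun C E) (G : QFun C D) (Y : D.Ob) (Z : E.Ob) :
    (kanPre F G Y).arr Z = ⨆ X : C.Ob, Q.comp (kanArr F G Y X) (E.hom Z (F.obj X)) := rfl

end Fwd

section Fwd2
open Quantaloid

variable {Obj : Type u} {Q : Quantaloid.{u, v} Obj}

theorem stmt17_fwd (E : QCat.{u, v, w} Q) (hT : QTotal E) (C D : QCat.{u, v, w} Q)
    (F : QFun C E) (G : QFun C D) (ffG : FullyFaithful G) :
    ∃ H : QFun D E, CompIso G H F := by
  choose Hobj hspec using fun Y : D.Ob => hT (kanPre F G Y)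
  have hext : ∀ Y, D.ext Y = E.ext (Hobj Y) := fun Y => (hspec Y).choose
  have hsup : ∀ Y Z, Q.cast2 (hext Y).symm rfl (E.hom (Hobj Y) Z)
      = ⨅ X, Q.rext (E.hom X Z) ((kanPre F G Y).arr X) := fun Y => (hspec Y).choose_spec
  have cocone : ∀ Y W, (kanPre F G Y).arr W ≤ Q.cast2 rfl (hext Y).symm (E.hom W (Hobj Y)) :=
    fun Y W => sup_cocone (hext Y) (hsup Y) W
  have kanGX : ∀ X' X : C.Ob, kanArr F G (G.obj X) X'
      = Q.cast2 (F.ext_eq X') (G.ext_eq X) (C.hom X' X) := by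
    intro X' X
    rw [← ffG X' X, Quantaloid.cast2_cast2]
    rfl
  have kanStep : ∀ (Y Y' : D.Ob) (X : E.Ob),
      Q.comp (D.hom Y Y') ((kanPre F G Y).arr X) ≤ (kanPre F G Y').arr X := by
    intro Y Y' X
    rw [kanPre_arr, kanPre_arr, Quantaloid.comp_iSup]
    refine iSup_le fun X' => ?_
    rw [← Q.comp_assoc]
    refine le_trans (Quantaloid.comp_le_comp_left ?_ _)
      (le_iSup (fun X' => Q.comp (kanArr F G Y' X') (E.hom X (F.obj X'))) X')
    show Q.comp (D.hom Y Y')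
        (Q.cast2 ((G.ext_eq X').symm.trans (F.ext_eq X')) rfl (D.hom (G.obj X') Y)) ≤
      Q.cast2 ((G.ext_eq X').symm.trans (F.ext_eq X')) rfl (D.hom (G.obj X') Y')
    rw [Quantaloid.comp_cast2_dom]
    exact Quantaloid.cast2_mono _ rfl (D.comp_le (G.obj X') Y Y')
  have le_hom : ∀ Y Y', D.hom Y Y' ≤
      Q.cast2 (hext Y).symm (hext Y').symm (E.hom (Hobj Y) (Hobj Y')) := by
    intro Y Y'
    have e1 : Q.cast2 (hext Y).symm (hext Y').symm (E.hom (Hobj Y) (Hobj Y'))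
        = Q.cast2 rfl (hext Y').symm
            (Q.cast2 (hext Y).symm rfl (E.hom (Hobj Y) (Hobj Y'))) := by
      rw [Quantaloid.cast2_cast2]
    rw [e1, hsup Y (Hobj Y')]; erw [Quantaloid.cast2_iInf]
    refine le_iInf fun X => ?_
    erw [Quantaloid.cast2_rext]
    refine Quantaloid.le_rext_iff.mpr ?_
    exact le_trans (kanStep Y Y' X) (cocone Y' X)
  refine ⟨⟨Hobj, hext, le_hom⟩, ?_, ?_⟩
  · -- unit: 1 ≤ E(H(GX), FX)
    intro X
    have e2 : Q.cast2 ((G.ext_eq X).trans (hext (G.obj X))).symm (F.ext_eq X).symm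
          (E.hom (Hobj (G.obj X)) (F.obj X))
        = Q.cast2 (G.ext_eq X).symm (F.ext_eq X).symm
            (Q.cast2 (hext (G.obj X)).symm rfl (E.hom (Hobj (G.obj X)) (F.obj X))) := by
      rw [Quantaloid.cast2_cast2]
    show Q.one (C.ext X) ≤ Q.cast2 ((G.ext_eq X).trans (hext (G.obj X))).symm
      (F.ext_eq X).symm (E.hom (Hobj (G.obj X)) (F.obj X))
    rw [e2, hsup (G.obj X) (F.obj X)]; erw [Quantaloid.cast2_iInf]
    refine le_iInf fun W => ?_
    refine Quantaloid.one_le_rext_cast (G.ext_eq X) (F.ext_eq X) _ _ ?_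
    rw [kanPre_arr, Quantaloid.cast2_iSup]
    refine iSup_le fun X' => ?_
    have kk : Q.cast2 (F.ext_eq X') (G.ext_eq X) (C.hom X' X) ≤
        Q.cast2 rfl ((F.ext_eq X).symm.trans (G.ext_eq X))
          (E.hom (F.obj X') (F.obj X)) := by
      refine le_trans (Quantaloid.cast2_mono (F.ext_eq X') (G.ext_eq X) (F.le_hom X' X)) ?_
      rw [Quantaloid.cast2_cast2]
    have inner : Q.comp (kanArr F G (G.obj X) X') (E.hom W (F.obj X')) ≤
        Q.cast2 rfl ((F.ext_eq X).symm.trans (G.ext_eq X)) (E.hom W (F.obj X)) := by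
      rw [kanGX X' X]
      calc Q.comp (Q.cast2 (F.ext_eq X') (G.ext_eq X) (C.hom X' X)) (E.hom W (F.obj X'))
          ≤ Q.comp (Q.cast2 rfl ((F.ext_eq X).symm.trans (G.ext_eq X))
              (E.hom (F.obj X') (F.obj X))) (E.hom W (F.obj X')) :=
            Quantaloid.comp_le_comp_left kk _
      _ = Q.cast2 rfl ((F.ext_eq X).symm.trans (G.ext_eq X))
            (Q.comp (E.hom (F.obj X') (F.obj X)) (E.hom W (F.obj X'))) :=
          Quantaloid.cast2_cod_comp _ _ _
      _ ≤ Q.cast2 rfl ((F.ext_eq X).symm.trans (G.ext_eq X)) (E.hom W (F.obj X)) :=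
          Quantaloid.cast2_mono rfl _ (E.comp_le W (F.obj X') (F.obj X))
    calc Q.cast2 rfl ((G.ext_eq X).symm.trans (F.ext_eq X))
          (Q.comp (kanArr F G (G.obj X) X') (E.hom W (F.obj X')))
        ≤ Q.cast2 rfl ((G.ext_eq X).symm.trans (F.ext_eq X))
            (Q.cast2 rfl ((F.ext_eq X).symm.trans (G.ext_eq X)) (E.hom W (F.obj X))) :=
          Quantaloid.cast2_mono rfl _ inner
    _ = E.hom W (F.obj X) := by rw [Quantaloid.cast2_cast2]; rfl
  · -- counit: 1 ≤ E(FX, H(GX))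
    intro X
    have step1 : Q.cast2 (F.ext_eq X) (G.ext_eq X) (Q.one (C.ext X)) ≤
        (kanPre F G (G.obj X)).arr (F.obj X) := by
      rw [kanPre_arr]
      refine le_trans ?_
        (le_iSup (fun X' => Q.comp (kanArr F G (G.obj X) X')
          (E.hom (F.obj X) (F.obj X'))) X)
      calc Q.cast2 (F.ext_eq X) (G.ext_eq X) (Q.one (C.ext X))
          ≤ Q.cast2 (F.ext_eq X) (G.ext_eq X) (C.hom X X) :=
            Quantaloid.cast2_mono _ _ (C.id_le X)
      _ = Q.comp (Q.cast2 (F.ext_eq X) (G.ext_eq X) (C.hom X X))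
            (Q.one (E.ext (F.obj X))) := (Q.comp_one _).symm
      _ = Q.comp (kanArr F G (G.obj X) X) (Q.one (E.ext (F.obj X))) := by rw [kanGX X X]
      _ ≤ Q.comp (kanArr F G (G.obj X) X) (E.hom (F.obj X) (F.obj X)) :=
          Quantaloid.comp_le_comp_right _ (E.id_le (F.obj X))
    have step3 : Q.cast2 (F.ext_eq X) ((G.ext_eq X).trans (hext (G.obj X)))
        (Q.one (C.ext X)) ≤ E.hom (F.obj X) (Hobj (G.obj X)) := by
      calc Q.cast2 (F.ext_eq X) ((G.ext_eq X).trans (hext (G.obj X))) (Q.one (C.ext X))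
          = Q.cast2 rfl (hext (G.obj X))
              (Q.cast2 (F.ext_eq X) (G.ext_eq X) (Q.one (C.ext X))) := by
            rw [Quantaloid.cast2_cast2]
      _ ≤ Q.cast2 rfl (hext (G.obj X))
            (Q.cast2 rfl (hext (G.obj X)).symm
              (E.hom (F.obj X) (Hobj (G.obj X)))) :=
          Quantaloid.cast2_mono rfl _ (le_trans step1 (cocone (G.obj X) (F.obj X)))
      _ = E.hom (F.obj X) (Hobj (G.obj X)) := by rw [Quantaloid.cast2_cast2]; rfl
    exact (Quantaloid.le_cast2_iff' (F.ext_eq X).symm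
      ((G.ext_eq X).trans (hext (G.obj X))).symm _ _).mpr step3

end Fwd2

theorem stmt17 {Obj : Type u} {Q : Quantaloid.{u, v} Obj} (E : QCat.{u, v, w} Q) :
    QTotal E ↔
      ∀ (C D : QCat.{u, v, w} Q) (F : QFun C E) (G : QFun C D),
        FullyFaithful G → ∃ H : QFun D E, CompIso G H F := by
  constructor
  · intro hT C D F G ffG
    exact stmt17_fwd E hT C D F G ffG
  · exact stmt17_bwd E
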